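/- Let M = A ⊕ C be a block-diagonal positive definite Hermitian matrix (A of size d_P×d_P, C of size d_Q×d_Q) and let Y = [[0, B],[B*, 0]] be the off-diagonal Hermitian matrix built from a d_P×d_Q complex matrix B, and assume M + Y and M − Y are positive semidefinite. Then for every t ∈ [0,1), H_{M+tY}(Y,Y) ≥ H_M(Y,Y). -/

import Mathlib

open Matrix MeasureTheory
open scoped ComplexOrder

noncomputable section

set_option linter.unusedSectionVars false
set_option linter.unusedVariables false
set_option maxHeartbeats 1000000

section Helpers

variable {n : Type*} [Fintype n] [DecidableEq n]
open scoped MatrixOrder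

lemma psd_smul {A : Matrix n n ℂ} (hA : A.PosSemidef) {c : ℝ} (hc : 0 ≤ c) :
    (c • A).PosSemidef := by
  refine PosSemidef.of_dotProduct_mulVec_nonneg ?_ ?_
  · unfold Matrix.IsHermitian
    rw [conjTranspose_smul, hA.1]
    norm_num
  · intro x
    rw [Matrix.smul_mulVec, dotProduct_smul]
    exact smul_nonneg hc (hA.dotProduct_mulVec_nonneg x)

lemma psd_diag {A : Matrix n n ℂ} (hA : A.PosSemidef) (i : n) : 0 ≤ (A i i).re := by
  have := hA.dotProduct_mulVec_nonneg (Pi.single i 1)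
  simp [dotProduct, mulVec, Pi.single_apply] at this
  exact (Complex.le_def.mp this).1

lemma psd_trace_re_nonneg {A : Matrix n n ℂ} (hA : A.PosSemidef) : 0 ≤ A.trace.re := by
  rw [Matrix.trace, Complex.re_sum]
  exact Finset.sum_nonneg fun i _ => psd_diag hA i

/-- trace of product of two PSD matrices has nonnegative real part -/
lemma trace_mul_psd_re_nonneg {A B : Matrix n n ℂ} (hA : A.PosSemidef) (hB : B.PosSemidef) :
    0 ≤ ((A * B).trace).re := by
  set s := CFC.sqrt A with hs
  have hssq : s * s = A := CFC.sqrt_mul_sqrt_self A hA.nonneg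
  have hsh : sᴴ = s := (CFC.sqrt_nonneg A).posSemidef.isHermitian.eq
  have h1 : (A * B).trace = (sᴴ * B * s).trace := by
    rw [hsh]
    conv_lhs => rw [← hssq]
    rw [Matrix.mul_assoc, trace_mul_comm, Matrix.mul_assoc]
  rw [h1]
  exact psd_trace_re_nonneg (hB.conjTranspose_mul_mul_same s)

/-- trace monotone: A PSD, C - B PSD ⇒ re tr(A*B) ≤ re tr(A*C) -/
lemma trace_mul_psd_mono {A B C : Matrix n n ℂ} (hA : A.PosSemidef) (hCB : (C - B).PosSemidef) :
    ((A * B).trace).re ≤ ((A * C).trace).re := by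
  have h := trace_mul_psd_re_nonneg hA hCB
  rw [Matrix.mul_sub, trace_sub] at h
  simp only [Complex.sub_re] at h
  linarith

lemma trace_abab_re_nonneg {A B : Matrix n n ℂ} (hA : A.PosSemidef) (hB : B.PosSemidef) :
    0 ≤ ((A * B * A * B).trace).re := by
  set s := CFC.sqrt B with hs
  have hssq : s * s = B := CFC.sqrt_mul_sqrt_self B hB.nonneg
  have hsh : sᴴ = s := (CFC.sqrt_nonneg B).posSemidef.isHermitian.eq
  have hC : (sᴴ * A * s).PosSemidef := hA.conjTranspose_mul_mul_same s
  have h1 : (A * B * A * B).trace = ((sᴴ * A * s)ᴴ * (sᴴ * A * s)).trace := by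
    rw [hC.isHermitian.eq, hsh]
    rw [show A * B * A * B = A * s * (s * A * s) * s from by rw [← hssq]; noncomm_ring]
    rw [trace_mul_comm]
    congr 1
    noncomm_ring
  rw [h1]
  exact psd_trace_re_nonneg (posSemidef_conjTranspose_mul_self _)

lemma pd_mul_inv {G : Matrix n n ℂ} (h : G.PosDef) : G * G⁻¹ = 1 :=
  mul_nonsing_inv _ (isUnit_iff_ne_zero.mpr h.det_pos.ne')

lemma pd_inv_mul {G : Matrix n n ℂ} (h : G.PosDef) : G⁻¹ * G = 1 :=
  nonsing_inv_mul _ (isUnit_iff_ne_zero.mpr h.det_pos.ne')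

lemma key_pointwise (R Y J : Matrix n n ℂ) (t : ℝ)
    (hR : R.PosDef) (hp : (R + t • Y).PosDef) (hm : (R - t • Y).PosDef)
    (hYh : Y.IsHermitian) (hJ : J * J = 1) (hJR : J * R * J = R)
    (hJY : J * Y * J = -Y) :
    ((Y * R⁻¹ * Y * R⁻¹).trace).re ≤ ((Y * (R + t • Y)⁻¹ * Y * (R + t • Y)⁻¹).trace).re := by
  set Z : Matrix n n ℂ := t • Y with hZ
  set X : Matrix n n ℂ := (R + Z)⁻¹ with hX
  set Xb : Matrix n n ℂ := (R - Z)⁻¹ with hXb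
  set P : Matrix n n ℂ := R⁻¹ with hP
  have hZh : Zᴴ = Z := by
    rw [hZ, conjTranspose_smul, hYh.eq, star_trivial]
  have eRP : R * P = 1 := pd_mul_inv hR
  have ePR : P * R = 1 := pd_inv_mul hR
  have epX : (R + Z) * X = 1 := pd_mul_inv hp
  have eXp : X * (R + Z) = 1 := pd_inv_mul hp
  have emXb : (R - Z) * Xb = 1 := pd_mul_inv hm
  have eXbm : Xb * (R - Z) = 1 := pd_inv_mul hm
  -- J symmetry
  have hJZ : J * Z * J = -Z := by
    rw [hZ, mul_smul_comm, smul_mul_assoc, hJY, smul_neg]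
  have hRZJ : J * (R + Z) * J = R - Z := by
    rw [mul_add, add_mul, hJR, hJZ, sub_eq_add_neg]
  have hXbJ : Xb = J * X * J := by
    rw [hXb]
    apply inv_eq_left_inv
    rw [← hRZJ]
    have e : J * X * J * (J * (R + Z) * J) = J * (X * (J * J) * (R + Z) * J) := by
      noncomm_ring
    rw [e, hJ, mul_one, eXp, one_mul, hJ]
  have heven : (Y * Xb * Y * Xb).trace = (Y * X * Y * X).trace := by
    rw [hXbJ]
    have e1 : Y * (J * X * J) * Y * (J * X * J) = (Y * J * X * J * Y * J * X) * J := by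
      noncomm_ring
    rw [e1, trace_mul_comm]
    have e2 : J * (Y * J * X * J * Y * J * X) = (J * Y * J) * X * ((J * Y * J) * X) := by
      noncomm_ring
    rw [e2, hJY]
    congr 1
    noncomm_ring
  -- decomposition X = K - V, Xb = K + V
  set K : Matrix n n ℂ := X * R * Xb with hK
  set V : Matrix n n ℂ := X * Z * Xb with hV
  have hXK : X = K - V := by
    rw [hK, hV]
    have e : X * R * Xb - X * Z * Xb = X * ((R - Z) * Xb) := by noncomm_ring
    rw [e, emXb, mul_one]
  have hXbK : Xb = K + V := by
    rw [hK, hV]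
    have e : X * R * Xb + X * Z * Xb = X * (R + Z) * Xb := by noncomm_ring
    rw [e, eXp, one_mul]
  have hsum : (Y * X * Y * X).trace + (Y * Xb * Y * Xb).trace
      = 2 * (Y * K * Y * K).trace + 2 * (Y * V * Y * V).trace := by
    rw [hXK, hXbK, ← trace_add]
    have em : Y * (K - V) * Y * (K - V) + Y * (K + V) * Y * (K + V)
        = (Y * K * Y * K + Y * K * Y * K) + (Y * V * Y * V + Y * V * Y * V) := by
      noncomm_ring
    rw [em, trace_add, trace_add, trace_add]
    ring
  have hmain : (Y * X * Y * X).trace = (Y * K * Y * K).trace + (Y * V * Y * V).trace := by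
    rw [heven] at hsum
    linear_combination hsum / 2
  -- PSD facts
  have hXpsd : X.PosSemidef := hp.inv.posSemidef
  have hXbpsd : Xb.PosSemidef := hm.inv.posSemidef
  have hPpsd : P.PosSemidef := hR.inv.posSemidef
  have hPh : Pᴴ = P := hPpsd.isHermitian.eq
  have hA1 : (Y * X * Y).PosSemidef := by
    have := hXpsd.conjTranspose_mul_mul_same Y
    rwa [hYh.eq] at this
  have hVtr : 0 ≤ ((Y * V * Y * V).trace).re := by
    have e0 : V = t • (X * Y * Xb) := by
      rw [hV, hZ, mul_smul_comm, smul_mul_assoc]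
    have e : Y * V * Y * V = (t * t) • ((Y * X * Y) * Xb * ((Y * X * Y) * Xb)) := by
      rw [e0]
      simp only [mul_smul_comm, smul_mul_assoc, smul_smul]
      congr 1
      noncomm_ring
    rw [e, trace_smul]
    have h0 : 0 ≤ (((Y * X * Y) * Xb * (Y * X * Y) * Xb).trace).re :=
      trace_abab_re_nonneg hA1 hXbpsd
    have hre : ((t * t) • ((Y * X * Y) * Xb * ((Y * X * Y) * Xb)).trace).re
        = (t * t) * (((Y * X * Y) * Xb * ((Y * X * Y) * Xb)).trace).re := by
      simp [Complex.real_smul, Complex.mul_re]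
    rw [hre]
    have : (Y * X * Y) * Xb * ((Y * X * Y) * Xb) = (Y * X * Y) * Xb * (Y * X * Y) * Xb := by
      noncomm_ring
    rw [this]
    exact mul_nonneg (mul_self_nonneg t) h0
  -- K PSD
  have hKpsd : K.PosSemidef := by
    have h2 : X + Xb = K + K := by rw [hXK, hXbK]; abel
    have h3 : K = (1 / 2 : ℝ) • (X + Xb) := by
      rw [h2, ← two_smul ℝ K, smul_smul]
      norm_num
    rw [h3]
    exact psd_smul (hXpsd.add hXbpsd) (by norm_num)
  -- D and K - P PSD
  set D : Matrix n n ℂ := Z * P * Z with hD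
  have hDpsd : D.PosSemidef := by
    have := hPpsd.conjTranspose_mul_mul_same Z
    rwa [hZh] at this
  have hDh : Dᴴ = D := hDpsd.isHermitian.eq
  have hfac : (R - Z) * P * (R + Z) = R - D := by
    have e1 : (R - Z) * P = 1 - Z * P := by rw [Matrix.sub_mul, eRP]
    rw [e1, Matrix.sub_mul, one_mul, Matrix.mul_add, hD, Matrix.mul_assoc Z P R, ePR, mul_one]
    abel
  have hfacK : K * (R - D) = 1 := by
    rw [← hfac, hK]
    have e : X * R * Xb * ((R - Z) * P * (R + Z)) = X * R * (Xb * (R - Z)) * P * (R + Z) := by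
      noncomm_ring
    rw [e, eXbm, mul_one, Matrix.mul_assoc X R P, eRP, mul_one, eXp]
  have hfacK2 : (R - D) * K = 1 := by
    rw [← hfac, hK]
    have e : (R - Z) * P * (R + Z) * (X * R * Xb) = (R - Z) * P * ((R + Z) * X) * R * Xb := by
      noncomm_ring
    rw [e, epX, mul_one, Matrix.mul_assoc (R - Z) P R, ePR, mul_one, emXb]
  have hi : K - P = K * D * P := by
    have e : K * D * P = K * R * P - K * (R - D) * P := by noncomm_ring
    rw [e, hfacK, one_mul, Matrix.mul_assoc K R P, eRP, mul_one]
  have hii : K - P = P * D * K := by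
    have e : P * D * K = P * R * K - P * ((R - D) * K) := by noncomm_ring
    rw [e, hfacK2, mul_one, ePR, one_mul]
  have hKP : (K - P).PosSemidef := by
    have hform : K - P = Pᴴ * D * P + (D * P)ᴴ * K * (D * P) := by
      rw [conjTranspose_mul, hPh, hDh]
      calc K - P = P * D * K := hii
        _ = P * D * (P + (K - P)) := by rw [add_sub_cancel]
        _ = P * D * P + P * D * (K - P) := by rw [Matrix.mul_add]
        _ = P * D * P + P * D * (K * D * P) := by rw [← hi]
        _ = P * D * P + Pᴴ * Dᴴ * K * (D * P) := by rw [hPh, hDh]; noncomm_ring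
      rw [hPh, hDh]
    rw [hform]
    exact (hDpsd.conjTranspose_mul_mul_same P).add (hKpsd.conjTranspose_mul_mul_same (D * P))
  -- final comparison
  have hA0 : (Y * P * Y).PosSemidef := by
    have := hPpsd.conjTranspose_mul_mul_same Y
    rwa [hYh.eq] at this
  have hAK : (Y * K * Y).PosSemidef := by
    have := hKpsd.conjTranspose_mul_mul_same Y
    rwa [hYh.eq] at this
  have hcmp : ((Y * P * Y * P).trace).re ≤ ((Y * K * Y * K).trace).re := by
    have em : Y * K * Y * K - Y * P * Y * P = (Y * K * Y) * (K - P) + (Y * (K - P)) * (Y * P) := by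
      noncomm_ring
    have h1 : 0 ≤ (((Y * K * Y) * (K - P)).trace).re := trace_mul_psd_re_nonneg hAK hKP
    have h2 : 0 ≤ (((Y * (K - P)) * (Y * P)).trace).re := by
      rw [trace_mul_comm]
      have e : (Y * P) * (Y * (K - P)) = (Y * P * Y) * (K - P) := by noncomm_ring
      rw [e]
      exact trace_mul_psd_re_nonneg hA0 hKP
    have e3 : ((Y * K * Y * K).trace).re - ((Y * P * Y * P).trace).re
        = (((Y * K * Y) * (K - P)).trace).re + (((Y * (K - P)) * (Y * P)).trace).re := by
      rw [← Complex.add_re, ← trace_add, ← em, ← Complex.sub_re, ← trace_sub]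
    linarith
  have hfin : ((Y * X * Y * X).trace).re
      = ((Y * K * Y * K).trace).re + ((Y * V * Y * V).trace).re := by
    rw [hmain, Complex.add_re]
  linarith

lemma real_smul_one_eq_diagonal (c : ℝ) :
    (c • (1 : Matrix n n ℂ)) = diagonal (fun _ => (c : ℂ)) := by
  ext i j
  by_cases h : i = j <;>
    simp [h, Matrix.one_apply, Matrix.diagonal_apply, Complex.real_smul]

/-- every PD matrix dominates ε•1 for some ε > 0 -/
lemma posdef_le_smul_one {N : Matrix n n ℂ} (hN : N.PosDef) :
    ∃ ε : ℝ, 0 < ε ∧ (N - ε • 1).PosSemidef := by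
  cases isEmpty_or_nonempty n with
  | inl h =>
    refine ⟨1, one_pos, ⟨?_, fun x => ?_⟩⟩
    · ext i j; exact isEmptyElim i
    · simp [Subsingleton.elim x 0]
  | inr h =>
    set lam := hN.isHermitian.eigenvalues with hlam
    set U : Matrix n n ℂ := (hN.isHermitian.eigenvectorUnitary : Matrix n n ℂ) with hU
    obtain ⟨i0, _, hmin⟩ := Finset.exists_min_image Finset.univ lam ⟨Classical.arbitrary n, Finset.mem_univ _⟩
    refine ⟨lam i0, hN.eigenvalues_pos i0, ?_⟩
    have hUU : U * star U = 1 := (Matrix.mem_unitaryGroup_iff).mp hN.isHermitian.eigenvectorUnitary.2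
    have hspec : N = U * diagonal (fun i => (lam i : ℂ)) * star U := hN.isHermitian.spectral_theorem
    have hdiag : N - lam i0 • 1
        = U * (diagonal (fun i => (lam i : ℂ)) - diagonal (fun _ => (lam i0 : ℂ))) * star U := by
      rw [Matrix.mul_sub, Matrix.sub_mul, ← hspec, ← real_smul_one_eq_diagonal,
        mul_smul_comm, smul_mul_assoc, mul_one, hUU]
    rw [hdiag]
    have hd : (diagonal (fun i => (lam i : ℂ)) - diagonal (fun _ => (lam i0 : ℂ))).PosSemidef := by
      rw [diagonal_sub]
      refine Matrix.PosSemidef.diagonal fun i => ?_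
      rw [Pi.zero_apply, ← Complex.ofReal_sub, Complex.zero_le_real]
      have := hmin i (Finset.mem_univ i)
      linarith
    have := hd.conjTranspose_mul_mul_same (star U)
    rwa [star_eq_conjTranspose, conjTranspose_conjTranspose] at this

lemma pd_real_smul_one {c : ℝ} (hc : 0 < c) : (c • (1 : Matrix n n ℂ)).PosDef := by
  rw [real_smul_one_eq_diagonal]
  exact Matrix.posDef_diagonal_iff.mpr fun i => Complex.zero_lt_real.mpr hc

lemma integrand_nonneg_and_bound {N Y : Matrix n n ℂ} (hYh : Y.IsHermitian) {ε : ℝ} (hε : 0 < ε)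
    (hNe : (N - ε • 1).PosSemidef) {r : ℝ} (hr : 0 < r) :
    0 ≤ ((Y * (N + r • 1)⁻¹ * Y * (N + r • 1)⁻¹).trace).re ∧
    ((Y * (N + r • 1)⁻¹ * Y * (N + r • 1)⁻¹).trace).re
      ≤ (ε + r)⁻¹ ^ 2 * ((Y * Y).trace).re := by
  have hNpsd : N.PosSemidef := by
    have := hNe.add (pd_real_smul_one hε).posSemidef
    rwa [sub_add_cancel] at this
  have hRpd : (N + r • 1).PosDef := Matrix.PosDef.posSemidef_add hNpsd (pd_real_smul_one hr)
  set X : Matrix n n ℂ := (N + r • 1)⁻¹ with hXdef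
  have hXpd : X.PosDef := hRpd.inv
  set s : Matrix n n ℂ := CFC.sqrt X with hsdef
  have hss : s * s = X := CFC.sqrt_mul_sqrt_self X hXpd.posSemidef.nonneg
  have hsh : sᴴ = s := (CFC.sqrt_nonneg X).posSemidef.isHermitian.eq
  have hdX : X.det ≠ 0 := hXpd.det_pos.ne'
  have hds : s.det ≠ 0 := by
    intro h
    apply hdX
    rw [← hss, det_mul, h, mul_zero]
  have hXinv : X⁻¹ = N + r • 1 :=
    Matrix.nonsing_inv_nonsing_inv _ (isUnit_iff_ne_zero.mpr hRpd.det_pos.ne')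
  have hsXs : s * X⁻¹ * s = 1 := by
    conv_lhs => rw [← hss]
    rw [Matrix.mul_inv_rev]
    have e : s * (s⁻¹ * s⁻¹) * s = (s * s⁻¹) * (s⁻¹ * s) := by noncomm_ring
    rw [e, mul_nonsing_inv _ (isUnit_iff_ne_zero.mpr hds),
      nonsing_inv_mul _ (isUnit_iff_ne_zero.mpr hds), one_mul]
  have hgap : ((1 : Matrix n n ℂ) - (ε + r) • X).PosSemidef := by
    have hform : (1 : Matrix n n ℂ) - (ε + r) • X = sᴴ * (N - ε • 1) * s := by
      rw [hsh]
      have h1 : N - ε • 1 = X⁻¹ - (ε + r) • 1 := by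
        rw [hXinv, add_smul]
        abel
      rw [h1, Matrix.mul_sub, Matrix.sub_mul, hsXs]
      congr 1
      rw [mul_smul_comm, mul_one, smul_mul_assoc, hss]
    rw [hform]
    exact hNe.conjTranspose_mul_mul_same s
  have hcpos : (0:ℝ) < (ε + r) := by linarith
  set c : ℝ := (ε + r)⁻¹ with hcdef
  have hc : 0 ≤ c := by positivity
  have hgap' : (c • (1 : Matrix n n ℂ) - X).PosSemidef := by
    have e : c • (1 : Matrix n n ℂ) - X = c • ((1 : Matrix n n ℂ) - (ε + r) • X) := by
      rw [smul_sub, smul_smul, hcdef, inv_mul_cancel₀ hcpos.ne', one_smul]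
    rw [e]
    exact psd_smul hgap hc
  have hA1 : (Y * X * Y).PosSemidef := by
    have := hXpd.posSemidef.conjTranspose_mul_mul_same Y
    rwa [hYh.eq] at this
  have hYY : (Y * Y).PosSemidef := by
    have := Matrix.posSemidef_conjTranspose_mul_self Y
    rwa [hYh.eq] at this
  constructor
  · exact trace_mul_psd_re_nonneg hA1 hXpd.posSemidef
  · have step1 : ((Y * X * Y * X).trace).re ≤ (((Y * X * Y) * (c • 1)).trace).re :=
      trace_mul_psd_mono hA1 hgap'
    have e1 : (((Y * X * Y) * (c • 1)).trace).re = c * ((Y * X * Y).trace).re := by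
      rw [mul_smul_comm, mul_one, trace_smul]
      simp [Complex.real_smul, Complex.mul_re]
    have e2 : (Y * X * Y).trace = ((Y * Y) * X).trace := trace_mul_cycle Y X Y
    have step2 : (((Y * Y) * X).trace).re ≤ (((Y * Y) * (c • 1)).trace).re :=
      trace_mul_psd_mono hYY hgap'
    have e3 : (((Y * Y) * (c • 1)).trace).re = c * ((Y * Y).trace).re := by
      rw [mul_smul_comm, mul_one, trace_smul]
      simp [Complex.real_smul, Complex.mul_re]
    have h4 : ((Y * X * Y).trace).re ≤ c * ((Y * Y).trace).re := by
      rw [e2]; linarith [step2, e3.le, e3.ge]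
    have h5 : ((Y * X * Y * X).trace).re ≤ c * ((Y * X * Y).trace).re := by
      linarith [step1, e1.le]
    have hTnn : 0 ≤ ((Y * Y).trace).re := psd_trace_re_nonneg hYY
    calc ((Y * X * Y * X).trace).re ≤ c * ((Y * X * Y).trace).re := h5
      _ ≤ c * (c * ((Y * Y).trace).re) := mul_le_mul_of_nonneg_left h4 hc
      _ = c ^ 2 * ((Y * Y).trace).re := by ring

lemma continuousOn_integrand (N Y : Matrix n n ℂ) (hN : N.PosSemidef) :
    ContinuousOn (fun r : ℝ => ((Y * (N + r • 1)⁻¹ * Y * (N + r • 1)⁻¹).trace).re)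
      (Set.Ioi 0) := by
  have hc1 : Continuous (fun r : ℝ => (N + r • 1 : Matrix n n ℂ)) :=
    continuous_const.add (continuous_id.smul continuous_const)
  have hdet : ∀ r ∈ Set.Ioi (0:ℝ), (N + r • 1 : Matrix n n ℂ).det ≠ 0 := fun r hr =>
    (Matrix.PosDef.posSemidef_add hN (pd_real_smul_one hr)).det_pos.ne'
  have hXc : ContinuousOn (fun r : ℝ => (N + r • 1 : Matrix n n ℂ)⁻¹) (Set.Ioi 0) := by
    have he : (fun r : ℝ => (N + r • 1 : Matrix n n ℂ)⁻¹)
        = fun r : ℝ => ((N + r • 1 : Matrix n n ℂ).det)⁻¹ • (N + r • 1 : Matrix n n ℂ).adjugate := by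
      funext r
      rw [Matrix.inv_def, Ring.inverse_eq_inv']
    rw [he]
    exact ((hc1.matrix_det.continuousOn).inv₀ hdet).smul hc1.matrix_adjugate.continuousOn
  have hF : Continuous (fun A : Matrix n n ℂ => ((Y * A * Y * A).trace).re) := by
    apply Complex.continuous_re.comp
    apply Continuous.matrix_trace
    exact ((continuous_const.mul continuous_id).mul continuous_const).mul continuous_id
  exact hF.comp_continuousOn hXc

lemma integrableOn_integrand {N Y : Matrix n n ℂ} (hYh : Y.IsHermitian) (hN : N.PosDef) :
    MeasureTheory.IntegrableOn
      (fun r : ℝ => ((Y * (N + r • 1)⁻¹ * Y * (N + r • 1)⁻¹).trace).re) (Set.Ioi 0) := by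
  obtain ⟨ε, hε, hNe⟩ := posdef_le_smul_one hN
  set g : ℝ → ℝ := fun r => ((Y * (N + r • 1)⁻¹ * Y * (N + r • 1)⁻¹).trace).re with hg
  have hYY : (Y * Y).PosSemidef := by
    have := Matrix.posSemidef_conjTranspose_mul_self Y
    rwa [hYh.eq] at this
  set T : ℝ := ((Y * Y).trace).re with hT
  have hTnn : 0 ≤ T := psd_trace_re_nonneg hYY
  have hcont : ContinuousOn g (Set.Ioi 0) := continuousOn_integrand N Y hN.posSemidef
  have key : ∀ r ∈ Set.Ioi (0:ℝ), 0 ≤ g r ∧ g r ≤ (ε + r)⁻¹ ^ 2 * T := fun r hr =>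
    integrand_nonneg_and_bound hYh hε hNe hr
  rw [show Set.Ioi (0:ℝ) = Set.Ioc 0 1 ∪ Set.Ioi 1 from (Set.Ioc_union_Ioi_eq_Ioi zero_le_one).symm]
  apply MeasureTheory.IntegrableOn.union
  · apply MeasureTheory.Integrable.mono'
      (g := fun _ : ℝ => ε⁻¹ ^ 2 * T)
      (MeasureTheory.integrableOn_const measure_Ioc_lt_top.ne)
    · exact (hcont.mono (Set.Ioc_subset_Ioi_self.trans (le_refl _))).aestronglyMeasurable
        measurableSet_Ioc
    · rw [MeasureTheory.ae_restrict_iff' measurableSet_Ioc]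
      filter_upwards with r hr
      obtain ⟨h0, h1⟩ := key r (Set.mem_Ioi.mpr hr.1)
      rw [Real.norm_eq_abs, abs_of_nonneg h0]
      have hle : (ε + r)⁻¹ ≤ ε⁻¹ := by
        apply inv_anti₀ hε
        linarith [hr.1]
      calc g r ≤ (ε + r)⁻¹ ^ 2 * T := h1
        _ ≤ ε⁻¹ ^ 2 * T := by
            apply mul_le_mul_of_nonneg_right _ hTnn
            apply pow_le_pow_left₀ (inv_nonneg.mpr (by linarith [hr.1])) hle
  · apply MeasureTheory.Integrable.mono'
      (g := fun r : ℝ => T * r ^ (-2 : ℝ))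
      ((integrableOn_Ioi_rpow_of_lt (by norm_num) one_pos).const_mul T)
    · exact (hcont.mono (Set.Ioi_subset_Ioi zero_le_one)).aestronglyMeasurable measurableSet_Ioi
    · rw [MeasureTheory.ae_restrict_iff' measurableSet_Ioi]
      filter_upwards with r hr
      have hr1 : (1:ℝ) < r := hr
      have hr0 : (0:ℝ) < r := by linarith
      obtain ⟨h0, h1⟩ := key r (Set.mem_Ioi.mpr hr0)
      rw [Real.norm_eq_abs, abs_of_nonneg h0]
      have hle : (ε + r)⁻¹ ≤ r⁻¹ := by
        apply inv_anti₀ hr0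
        linarith
      have hrpow : r ^ (-2 : ℝ) = r⁻¹ ^ 2 := by
        rw [show (-2:ℝ) = -(2:ℕ) by push_cast; ring, Real.rpow_neg hr0.le, Real.rpow_natCast,
          inv_pow]
      calc g r ≤ (ε + r)⁻¹ ^ 2 * T := h1
        _ ≤ r⁻¹ ^ 2 * T := by
            apply mul_le_mul_of_nonneg_right _ hTnn
            apply pow_le_pow_left₀ (by positivity) hle
        _ = T * r ^ (-2 : ℝ) := by rw [hrpow]; ring

lemma pd_smul {A : Matrix n n ℂ} (hA : A.PosDef) {c : ℝ} (hc : 0 < c) : (c • A).PosDef := by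
  refine PosDef.of_dotProduct_mulVec_pos ?_ ?_
  · unfold Matrix.IsHermitian
    rw [conjTranspose_smul, hA.isHermitian.eq]
    norm_num
  · intro x hx
    rw [Matrix.smul_mulVec, dotProduct_smul]
    exact smul_pos hc (hA.dotProduct_mulVec_pos hx)


end Helpers

/-- BKM quadratic form `H_N(Y,Y) = ∫₀^∞ Tr[Y (N+rI)⁻¹ Y (N+rI)⁻¹] dr`. -/
def bkmH {m : Type*} [Fintype m] [DecidableEq m] (N Y : Matrix m m ℂ) : ℝ :=
  ∫ r in Set.Ioi (0 : ℝ),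
    ((Y * (N + r • 1)⁻¹ * Y * (N + r • 1)⁻¹).trace).re

/-- Midpoint BKM monotonicity: for block-diagonal positive definite
`M = A ⊕ C` and off-diagonal `Y = [[0,B],[B*,0]]` with `M ± Y ⪰ 0`,
`H_{M+tY}(Y,Y) ≥ H_M(Y,Y)` for all `t ∈ [0,1)`. -/
theorem bkm_midpoint_monotone {dP dQ : ℕ} (hdP : 1 ≤ dP) (hdQ : 1 ≤ dQ)
    (A : Matrix (Fin dP) (Fin dP) ℂ) (C : Matrix (Fin dQ) (Fin dQ) ℂ)
    (B : Matrix (Fin dP) (Fin dQ) ℂ)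
    (hA : A.PosDef) (hC : C.PosDef)
    (M : Matrix (Fin dP ⊕ Fin dQ) (Fin dP ⊕ Fin dQ) ℂ)
    (Y : Matrix (Fin dP ⊕ Fin dQ) (Fin dP ⊕ Fin dQ) ℂ)
    (hM : M = fromBlocks A 0 0 C) (hY : Y = fromBlocks 0 B Bᴴ 0)
    (hplus : (M + Y).PosSemidef) (hminus : (M - Y).PosSemidef)
    (t : ℝ) (ht0 : 0 ≤ t) (ht1 : t < 1) :
    bkmH (M + t • Y) Y ≥ bkmH M Y := by
  have hYh : Y.IsHermitian := by
    rw [hY]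
    unfold Matrix.IsHermitian
    rw [fromBlocks_conjTranspose]
    simp
  have hMpd : M.PosDef := by
    rw [hM]
    refine PosDef.of_dotProduct_mulVec_pos ?_ ?_
    · unfold Matrix.IsHermitian
      rw [fromBlocks_conjTranspose]
      simp [hA.isHermitian.eq, hC.isHermitian.eq]
    · intro x hx
      have hxe : x = Sum.elim (x ∘ Sum.inl) (x ∘ Sum.inr) := by
        funext i; cases i <;> rfl
      rw [hxe, Function.star_sumElim, fromBlocks_mulVec]
      simp only [Matrix.zero_mulVec, add_zero, zero_add]
      rw [sumElim_dotProduct_sumElim]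
      have hor : x ∘ Sum.inl ≠ 0 ∨ x ∘ Sum.inr ≠ 0 := by
        by_contra hcon
        push_neg at hcon
        apply hx
        funext i
        cases i with
        | inl a => exact congrFun hcon.1 a
        | inr a => exact congrFun hcon.2 a
      rcases hor with h1 | h2
      · exact add_pos_of_pos_of_nonneg (hA.dotProduct_mulVec_pos h1) (hC.posSemidef.dotProduct_mulVec_nonneg _)
      · exact add_pos_of_nonneg_of_pos (hA.posSemidef.dotProduct_mulVec_nonneg _) (hC.dotProduct_mulVec_pos h2)
  have comb_plus : (M + t • Y).PosSemidef := by
    have e : M + t • Y = ((1 + t) / 2) • (M + Y) + ((1 - t) / 2) • (M - Y) := by module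
    rw [e]
    exact (psd_smul hplus (by linarith)).add (psd_smul hminus (by linarith))
  have comb_minus : (M - t • Y).PosSemidef := by
    have e : M - t • Y = ((1 - t) / 2) • (M + Y) + ((1 + t) / 2) • (M - Y) := by module
    rw [e]
    exact (psd_smul hplus (by linarith)).add (psd_smul hminus (by linarith))
  have hMtpd : (M + t • Y).PosDef := by
    have e : M + t • Y = (1 - t) • M + t • (M + Y) := by module
    rw [e]
    exact (pd_smul hMpd (by linarith)).add_posSemidef (psd_smul hplus ht0)
  have hint0 := integrableOn_integrand hYh hMpd
  have hint1 := integrableOn_integrand hYh hMtpd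
  set J : Matrix (Fin dP ⊕ Fin dQ) (Fin dP ⊕ Fin dQ) ℂ := fromBlocks 1 0 0 (-1) with hJdef
  have hJ : J * J = 1 := by
    rw [hJdef, fromBlocks_multiply]
    simp [← fromBlocks_one]
  have hJM : J * M * J = M := by
    rw [hJdef, hM, fromBlocks_multiply, fromBlocks_multiply]
    simp
  have hJY : J * Y * J = -Y := by
    rw [hJdef, hY, fromBlocks_multiply, fromBlocks_multiply]
    simp [fromBlocks_neg]
  rw [ge_iff_le]
  unfold bkmH
  apply MeasureTheory.setIntegral_mono_on hint0 hint1 measurableSet_Ioi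
  intro r hr
  have hrpos : 0 < r := hr
  have hre : M + t • Y + r • 1 = (M + r • 1) + t • Y := by abel
  rw [hre]
  have hR : (M + r • 1).PosDef :=
    Matrix.PosDef.posSemidef_add hMpd.posSemidef (pd_real_smul_one hrpos)
  have hp : ((M + r • 1) + t • Y).PosDef := by
    rw [show (M + r • 1) + t • Y = (M + t • Y) + r • 1 by abel]
    exact Matrix.PosDef.posSemidef_add comb_plus (pd_real_smul_one hrpos)
  have hm2 : ((M + r • 1) - t • Y).PosDef := by
    rw [show (M + r • 1) - t • Y = (M - t • Y) + r • 1 by abel]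
    exact Matrix.PosDef.posSemidef_add comb_minus (pd_real_smul_one hrpos)
  have hJR : J * (M + r • 1) * J = M + r • 1 := by
    rw [mul_add, add_mul, hJM, mul_smul_comm, mul_one, smul_mul_assoc, hJ]
  exact key_pointwise (M + r • 1) Y J t hR hp hm2 hYh hJ hJR hJY
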